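/- Neither of the mode matrices A_I = A(0.5) nor A_II = A(-0.5) is Hurwitz: each has an eigenvalue with zero real part. -/

import Mathlib

open Matrix

lemma det_fin_four' (A : Matrix (Fin 4) (Fin 4) ℂ) :
    A.det =
      A 0 0 * (A 1 1 * (A 2 2 * A 3 3 - A 2 3 * A 3 2) - A 1 2 * (A 2 1 * A 3 3 - A 2 3 * A 3 1) + A 1 3 * (A 2 1 * A 3 2 - A 2 2 * A 3 1))
    - A 0 1 * (A 1 0 * (A 2 2 * A 3 3 - A 2 3 * A 3 2) - A 1 2 * (A 2 0 * A 3 3 - A 2 3 * A 3 0) + A 1 3 * (A 2 0 * A 3 2 - A 2 2 * A 3 0))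
    + A 0 2 * (A 1 0 * (A 2 1 * A 3 3 - A 2 3 * A 3 1) - A 1 1 * (A 2 0 * A 3 3 - A 2 3 * A 3 0) + A 1 3 * (A 2 0 * A 3 1 - A 2 1 * A 3 0))
    - A 0 3 * (A 1 0 * (A 2 1 * A 3 2 - A 2 2 * A 3 1) - A 1 1 * (A 2 0 * A 3 2 - A 2 2 * A 3 0) + A 1 2 * (A 2 0 * A 3 1 - A 2 1 * A 3 0)) := by
  rw [Matrix.det_succ_row_zero, Fin.sum_univ_four]
  simp (config := { decide := true }) [Matrix.det_fin_three, Matrix.submatrix_apply,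
    Fin.succAbove, Fin.lt_def, show (Fin.succ 2 : Fin 4) = 3 from rfl,
    show (Fin.castSucc 2 : Fin 4) = 2 from rfl]
  ring

lemma mem_spectrum_of_det_zero (M : Matrix (Fin 4) (Fin 4) ℂ) (z : ℂ)
    (h : (Matrix.diagonal (fun _ => z) - M).det = 0) : z ∈ spectrum ℂ M := by
  rw [spectrum.mem_iff]
  intro hu
  rw [Matrix.isUnit_iff_isUnit_det] at hu
  rw [show (algebraMap ℂ (Matrix (Fin 4) (Fin 4) ℂ)) z = Matrix.diagonal (fun _ => z) by
    ext i j; simp [Matrix.algebraMap_matrix_apply, Matrix.diagonal]] at hu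
  rw [h] at hu
  exact hu.ne_zero rfl

set_option maxHeartbeats 1600000 in
/-- neither A_I = A(0.5) nor A_II = A(-0.5) is Hurwitz:
each has an eigenvalue with zero real part. -/
theorem mode_matrices_not_Hurwitz
    (L1 L2 C1 C2 R : ℝ) (hL1 : 0 < L1) (hL2 : 0 < L2) (hC1 : 0 < C1)
    (hC2 : 0 < C2) (hR : 0 < R)
    (P : Matrix (Fin 4) (Fin 4) ℝ) (hP : P = (1/2 : ℝ) • Matrix.diagonal ![L1, L2, C1, C2])
    (A0q E0q : Matrix (Fin 4) (Fin 4) ℝ)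
    (hA0q : A0q = !![0,0,-1/2,0; 0,0,1/2,1; 1/2,-1/2,0,0; 0,-1,0,-1/R])
    (hE0q : E0q = !![0,0,1,0; 0,0,1,0; -1,-1,0,0; 0,0,0,0])
    (A : ℝ → Matrix (Fin 4) (Fin 4) ℝ)
    (hA : ∀ μ, A μ = (1/2 : ℝ) • (P⁻¹ * (A0q + μ • E0q)))
    (AI AII : Matrix (Fin 4) (Fin 4) ℝ)
    (hAI : AI = A (1/2)) (hAII : AII = A (-(1/2))) :
    (∃ z ∈ spectrum ℂ (AI.map (Complex.ofReal)), z.re = 0) ∧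
    (∃ z ∈ spectrum ℂ (AII.map (Complex.ofReal)), z.re = 0) := by
  have hPinv : P⁻¹ = Matrix.diagonal ![2/L1, 2/L2, 2/C1, 2/C2] := by
    rw [hP]
    apply Matrix.inv_eq_right_inv
    ext i j
    fin_cases i <;> fin_cases j <;>
      simp [Matrix.mul_apply, Fin.sum_univ_four, Matrix.diagonal, Matrix.one_apply,
        Matrix.vecHead, Matrix.vecTail] <;>
      field_simp
  have hAI' : AI = !![0,0,0,0; 0,0,1/L2,1/L2; 0,-1/C1,0,0; 0,-1/C2,0,-1/(R*C2)] := by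
    rw [hAI, hA, hPinv, hA0q, hE0q]
    ext i j
    fin_cases i <;> fin_cases j <;>
      simp [Matrix.mul_apply, Fin.sum_univ_four, Matrix.diagonal,
        Matrix.vecHead, Matrix.vecTail] <;>
      field_simp <;> ring <;> simp
  have hAII' : AII = !![0,0,-1/L1,0; 0,0,0,1/L2; 1/C1,0,0,0; 0,-1/C2,0,-1/(R*C2)] := by
    rw [hAII, hA, hPinv, hA0q, hE0q]
    ext i j
    fin_cases i <;> fin_cases j <;>
      simp [Matrix.mul_apply, Fin.sum_univ_four, Matrix.diagonal,
        Matrix.vecHead, Matrix.vecTail] <;>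
      field_simp <;> ring <;> simp
  constructor
  · refine ⟨0, ?_, rfl⟩
    apply mem_spectrum_of_det_zero
    rw [hAI', det_fin_four']
    simp [Matrix.sub_apply, Matrix.map_apply, Matrix.diagonal, Matrix.vecHead, Matrix.vecTail]
  · set s : ℝ := Real.sqrt (1/(L1*C1)) with hs
    refine ⟨Complex.I * (s : ℂ), ?_, by simp⟩
    apply mem_spectrum_of_det_zero
    set z : ℂ := Complex.I * (s : ℂ) with hz
    have hz2 : z ^ 2 = -((L1:ℂ)⁻¹ * (C1:ℂ)⁻¹) := by
      rw [hz]
      rw [mul_pow, Complex.I_sq]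
      rw [← Complex.ofReal_pow, hs, Real.sq_sqrt (by positivity)]
      push_cast
      ring
    have hdet : (Matrix.diagonal (fun _ => z) -
        (!![0,0,-1/L1,0; 0,0,0,1/L2; 1/C1,0,0,0;
            0,-1/C2,0,-1/(R*C2)] : Matrix (Fin 4) (Fin 4) ℝ).map Complex.ofReal).det
        = (z^2 + (L1:ℂ)⁻¹ * (C1:ℂ)⁻¹) *
          (z^2 + z * ((R:ℂ)⁻¹ * (C2:ℂ)⁻¹) + (L2:ℂ)⁻¹ * (C2:ℂ)⁻¹) := by
      rw [det_fin_four']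
      simp [Matrix.sub_apply, Matrix.map_apply, Matrix.diagonal,
        Matrix.vecHead, Matrix.vecTail]
      push_cast
      ring
    rw [hAII', hdet, hz2]
    ring
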